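/- Let p be a prime element of 𝒪 with p ≡ 1 (mod 3) and let w, B, b ∈ 𝒪 with bwB coprime to p. Then ∑_{A (p)*} (A/p)₃ · e(b·(wA)⁻¹/p) · ∑_{x (p)} e((A w² x³ + p B x)/p) = μ(p)·(w/p)₃·g(1,p) + (b⁻¹/p)₃·N(p), where b⁻¹ is an inverse of b modulo p and μ(p) = −1. -/

import Mathlib

noncomputable section


section Key
open Finset
set_option linter.unusedSectionVars false

variable {F : Type*} [Field F] [Fintype F] [DecidableEq F]

lemma chi_cube (χ : MulChar F ℂ) (hχ3 : χ^3 = 1) (u : Fˣ) : (χ ↑u)^3 = 1 := by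
  rw [← MulChar.pow_apply' χ three_ne_zero, hχ3, MulChar.one_apply_coe]

lemma chi_cube' (χ : MulChar F ℂ) (hχ3 : χ^3 = 1) {a : F} (ha : a ≠ 0) : (χ a)^3 = 1 :=
  chi_cube χ hχ3 (Units.mk0 a ha)

lemma chi_ne_zero (χ : MulChar F ℂ) (hχ3 : χ^3 = 1) {a : F} (ha : a ≠ 0) : χ a ≠ 0 := by
  intro h
  have := chi_cube' χ hχ3 ha
  rw [h] at this; simp at this

lemma chi_inv_val (χ : MulChar F ℂ) {a : F} (ha : a ≠ 0) : χ a⁻¹ = (χ a)⁻¹ := by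
  have h : χ a⁻¹ * χ a = 1 := by rw [← map_mul, inv_mul_cancel₀ ha, map_one]
  exact eq_inv_of_mul_eq_one_left h

lemma chi_neg_one (χ : MulChar F ℂ) (hχ3 : χ^3 = 1) : χ (-1) = 1 := by
  have h1 : ((-1 : F))^3 = -1 := by ring
  have h2 : (χ (-1))^3 = 1 := chi_cube' χ hχ3 (by simp)
  calc χ (-1) = χ ((-1)^3) := by rw [h1]
  _ = (χ (-1))^3 := map_pow χ _ _
  _ = 1 := h2

lemma exists_gen (χ : MulChar F ℂ) (hχ : χ ≠ 1) (hχ3 : χ^3 = 1) :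
    ∃ g : Fˣ, (∀ x : Fˣ, x ∈ Subgroup.zpowers g) ∧ orderOf (χ ↑g) = 3 := by
  obtain ⟨g, hg⟩ := IsCyclic.exists_generator (α := Fˣ)
  refine ⟨g, hg, ?_⟩
  have h3 : (χ ↑g)^3 = 1 := chi_cube χ hχ3 g
  have hne : χ ↑g ≠ 1 := by
    intro h
    apply hχ
    rw [MulChar.eq_one_iff]
    intro a
    obtain ⟨k, (hk : g ^ k = a)⟩ := mem_powers_iff_mem_zpowers.mpr (hg a)
    rw [← hk, Units.val_pow_eq_pow_val, map_pow, h, one_pow]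
  exact orderOf_eq_prime h3 hne

lemma three_dvd_card (χ : MulChar F ℂ) (hχ : χ ≠ 1) (hχ3 : χ^3 = 1) :
    3 ∣ Fintype.card F - 1 := by
  classical
  obtain ⟨g, hg, hord⟩ := exists_gen χ hχ hχ3
  have h : (χ ↑g) ^ (Fintype.card Fˣ) = 1 := by
    rw [← map_pow, ← Units.val_pow_eq_pow_val, pow_card_eq_one, Units.val_one, map_one]
  have := orderOf_dvd_of_pow_eq_one h
  rwa [hord, Fintype.card_units] at this

lemma cube_of_chi_eq_one (χ : MulChar F ℂ) (hχ : χ ≠ 1) (hχ3 : χ^3 = 1) {y : Fˣ}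
    (h : χ ↑y = 1) : ∃ t : Fˣ, t^3 = y := by
  obtain ⟨g, hg, hord⟩ := exists_gen χ hχ hχ3
  obtain ⟨k, (hk : g ^ k = y)⟩ := mem_powers_iff_mem_zpowers.mpr (hg y)
  have hχk : (χ ↑g)^k = 1 := by
    rw [← map_pow, ← Units.val_pow_eq_pow_val, hk, h]
  have h3k : 3 ∣ k := hord ▸ orderOf_dvd_of_pow_eq_one hχk
  refine ⟨g ^ (k/3), ?_⟩
  rw [← pow_mul, Nat.div_mul_cancel h3k, hk]

lemma exists_order_three (χ : MulChar F ℂ) (hχ : χ ≠ 1) (hχ3 : χ^3 = 1) :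
    ∃ ζ : Fˣ, orderOf ζ = 3 := by
  classical
  obtain ⟨g, hg, _⟩ := exists_gen χ hχ hχ3
  have hcard : orderOf g = Fintype.card F - 1 := by
    rw [orderOf_eq_card_of_forall_mem_zpowers hg, Nat.card_eq_fintype_card, Fintype.card_units]
  have hq3 : 3 ∣ Fintype.card F - 1 := three_dvd_card χ hχ hχ3
  have hne : Fintype.card F - 1 ≠ 0 := by
    have := Fintype.one_lt_card (α := F)
    omega
  refine ⟨g ^ ((Fintype.card F - 1)/3), ?_⟩
  rw [orderOf_pow, hcard, Nat.gcd_eq_right (Nat.div_dvd_of_dvd hq3), Nat.div_div_self hq3 hne]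

lemma cube_roots_card (χ : MulChar F ℂ) (hχ : χ ≠ 1) (hχ3 : χ^3 = 1) :
    (univ.filter fun z : F => z^3 = 1).card = 3 := by
  obtain ⟨ζ, hζ⟩ := exists_order_three χ hχ hχ3
  have hζ3 : (ζ : F)^3 = 1 := by
    rw [← Units.val_pow_eq_pow_val, ← hζ, pow_orderOf_eq_one, Units.val_one]
  have hζne : (ζ : F) ≠ 1 := by
    intro h
    have : ζ = 1 := Units.ext h
    rw [this, orderOf_one] at hζ; omega
  have hζ2ne : (ζ : F)^2 ≠ 1 := by
    intro h
    have : ζ^2 = 1 := Units.ext (by rwa [Units.val_pow_eq_pow_val, Units.val_one])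
    have := orderOf_dvd_of_pow_eq_one this
    rw [hζ] at this; omega
  have hζζ2 : (ζ : F) ≠ (ζ : F)^2 := by
    intro h
    apply hζne
    have hz : (ζ:F) ≠ 0 := Units.ne_zero ζ
    have : (ζ:F) * 1 = (ζ:F) * (ζ:F) := by rw [mul_one, ← sq, ← h]
    exact ((mul_right_injective₀ hz this)).symm
  set T : Finset F := {1, (ζ:F), (ζ:F)^2} with hT
  have hTcard : T.card = 3 := by
    rw [hT, Finset.card_insert_of_notMem (by
        simp only [Finset.mem_insert, Finset.mem_singleton]
        push_neg
        exact ⟨hζne.symm, fun h => hζ2ne h.symm⟩),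
      Finset.card_insert_of_notMem (by simp [hζζ2]), Finset.card_singleton]
  have hsub : T ⊆ univ.filter fun z : F => z^3 = 1 := by
    intro z hz
    simp only [hT, Finset.mem_insert, Finset.mem_singleton] at hz
    simp only [Finset.mem_filter, Finset.mem_univ, true_and]
    rcases hz with rfl | rfl | rfl
    · exact one_pow 3
    · exact hζ3
    · rw [← pow_mul, mul_comm, pow_mul, hζ3, one_pow]
  have hle : (univ.filter fun z : F => z^3 = 1).card ≤ 3 := by
    classical
    have hP : ((Polynomial.X : Polynomial F)^3 - Polynomial.C 1) ≠ 0 := by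
      intro h
      have := Polynomial.natDegree_X_pow_sub_C (n := 3) (r := (1:F))
      rw [h] at this
      simp at this
    have hsub2 : (univ.filter fun z : F => z^3 = 1) ⊆
        ((Polynomial.X : Polynomial F)^3 - Polynomial.C 1).roots.toFinset := by
      intro z hz
      simp only [Finset.mem_filter] at hz
      rw [Multiset.mem_toFinset, Polynomial.mem_roots hP]
      simp [Polynomial.IsRoot, hz.2]
    calc (univ.filter fun z : F => z^3 = 1).card
        ≤ ((Polynomial.X : Polynomial F)^3 - Polynomial.C 1).roots.toFinset.card :=
          Finset.card_le_card hsub2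
      _ ≤ Multiset.card ((Polynomial.X : Polynomial F)^3 - Polynomial.C 1).roots :=
          Multiset.toFinset_card_le _
      _ ≤ 3 := by
          have := Polynomial.card_roots' ((Polynomial.X : Polynomial F)^3 - Polynomial.C 1)
          rwa [Polynomial.natDegree_X_pow_sub_C] at this
  have := Finset.eq_of_subset_of_card_le hsub (by omega)
  rw [← this, hTcard]

lemma fiber_card (χ : MulChar F ℂ) (hχ : χ ≠ 1) (hχ3 : χ^3 = 1) (y : F) :
    (((univ.filter fun t : F => t^3 = y).card : ℕ) : ℂ) = 1 + χ y + (χ y)^2 := by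
  rcases eq_or_ne y 0 with rfl | hy
  · have : (univ.filter fun t : F => t^3 = 0) = {0} := by
      ext t
      simp [pow_eq_zero_iff (three_ne_zero)]
    rw [this]
    rw [MulChar.map_zero]
    simp
  by_cases hsol : ∃ t : F, t^3 = y
  · obtain ⟨t₀, ht₀⟩ := hsol
    have ht₀ne : t₀ ≠ 0 := by rintro rfl; apply hy; rw [← ht₀]; ring
    have hχy : χ y = 1 := by rw [← ht₀, map_pow]; exact chi_cube' χ hχ3 ht₀ne
    have himg : (univ.filter fun t : F => t^3 = y) =
        (univ.filter fun z : F => z^3 = 1).image (fun z => t₀ * z) := by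
      ext t
      simp only [Finset.mem_filter, Finset.mem_univ, true_and, Finset.mem_image]
      constructor
      · intro ht
        refine ⟨t₀⁻¹ * t, ?_, ?_⟩
        · rw [mul_pow, ht, ← ht₀, inv_pow]
          exact inv_mul_cancel₀ (pow_ne_zero _ ht₀ne)
        · field_simp
      · rintro ⟨z, hz1, rfl⟩
        rw [mul_pow, ht₀, hz1, mul_one]
    rw [himg, Finset.card_image_of_injective _ (mul_right_injective₀ ht₀ne),
      cube_roots_card χ hχ hχ3, hχy]
    norm_num
  · have : (univ.filter fun t : F => t^3 = y) = ∅ := by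
      rw [Finset.filter_eq_empty_iff]
      intro t _
      exact fun h => hsol ⟨t, h⟩
    rw [this]
    have hχyne : χ y ≠ 1 := by
      intro h
      obtain ⟨t, ht⟩ := cube_of_chi_eq_one χ hχ hχ3 (y := Units.mk0 y hy) h
      exact hsol ⟨↑t, by rw [← Units.val_pow_eq_pow_val, ht, Units.val_mk0]⟩
    have h3 : (χ y)^3 = 1 := chi_cube' χ hχ3 hy
    have hfac : (χ y - 1) * (1 + χ y + (χ y)^2) = 0 := by
      have : (χ y - 1) * (1 + χ y + (χ y)^2) = (χ y)^3 - 1 := by ring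
      rw [this, h3, sub_self]
    rcases mul_eq_zero.mp hfac with h | h
    · exact absurd (by linear_combination h) hχyne
    · simp [← h]

lemma sum_units_eq (f : F → ℂ) : ∑ u : Fˣ, f ↑u = (∑ y : F, f y) - f 0 := by
  have h : ∑ y ∈ univ.erase (0:F), f y + f 0 = ∑ y : F, f y :=
    Finset.sum_erase_add _ _ (mem_univ 0)
  have h2 : ∑ u : Fˣ, f ↑u = ∑ y ∈ univ.erase (0:F), f y := by
    apply Finset.sum_bij (fun (u : Fˣ) _ => (u : F))
    · intro u _; exact Finset.mem_erase.mpr ⟨Units.ne_zero u, mem_univ _⟩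
    · intro a _ b _ hab; exact Units.ext hab
    · intro y hy; exact ⟨Units.mk0 y (Finset.mem_erase.mp hy).1, mem_univ _, rfl⟩
    · intro u _; rfl
  rw [h2, ← h]; ring

lemma sum_mulShift_zero (ψ : AddChar F ℂ) (hψ : ψ.IsPrimitive) {a : F} (ha : a ≠ 0) :
    ∑ y : F, ψ (a * y) = 0 := by
  have h := AddChar.sum_eq_zero_of_ne_one (hψ ha)
  simpa [AddChar.mulShift_apply] using h

lemma sum_chi_mulShift (χ : MulChar F ℂ) (ψ : AddChar F ℂ) {a : F} (ha : a ≠ 0) :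
    ∑ y : F, χ y * ψ (a * y) = χ a⁻¹ * gaussSum χ ψ := by
  have key := gaussSum_mulShift χ ψ (Units.mk0 a ha)
  rw [Units.val_mk0] at key
  have h1 : gaussSum χ (ψ.mulShift a) = ∑ y : F, χ y * ψ (a * y) :=
    Finset.sum_congr rfl (fun y _ => by rw [AddChar.mulShift_apply])
  rw [h1] at key
  have h2 : χ a⁻¹ * χ a = 1 := by rw [← map_mul, inv_mul_cancel₀ ha, map_one]
  calc ∑ y : F, χ y * ψ (a * y) = (χ a⁻¹ * χ a) * (∑ y : F, χ y * ψ (a * y)) := by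
        rw [h2, one_mul]
    _ = χ a⁻¹ * gaussSum χ ψ := by rw [mul_assoc, key]

lemma cube_inner_sum (χ : MulChar F ℂ) (hχ : χ ≠ 1) (hχ3 : χ^3 = 1) (ψ : AddChar F ℂ)
    (hψ : ψ.IsPrimitive) {a : F} (ha : a ≠ 0) :
    ∑ t : F, ψ (a * t^3) = χ a⁻¹ * gaussSum χ ψ + (χ a⁻¹)^2 * gaussSum (χ^2) ψ := by
  classical
  have hfib : ∑ t : F, ψ (a * t^3)
      = ∑ y : F, (((univ.filter fun t : F => t^3 = y).card : ℕ) : ℂ) * ψ (a * y) := by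
    rw [← Finset.sum_fiberwise_of_maps_to (g := fun t : F => t^3)
      (fun t _ => mem_univ (t^3)) (fun t : F => ψ (a * t^3))]
    refine Finset.sum_congr rfl fun y _ => ?_
    have : ∑ t ∈ univ.filter (fun t : F => t^3 = y), ψ (a * t^3)
        = ∑ t ∈ univ.filter (fun t : F => t^3 = y), ψ (a * y) := by
      refine Finset.sum_congr rfl fun t ht => ?_
      rw [(Finset.mem_filter.mp ht).2]
    rw [this, Finset.sum_const, nsmul_eq_mul]
  rw [hfib]
  have hsplit : ∀ y : F, (((univ.filter fun t : F => t^3 = y).card : ℕ) : ℂ) * ψ (a * y)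
      = ψ (a * y) + χ y * ψ (a * y) + (χ^2) y * ψ (a * y) := by
    intro y
    rw [fiber_card χ hχ hχ3 y]
    rcases eq_or_ne y 0 with rfl | hy
    · rw [MulChar.map_zero, MulChar.map_zero]; ring
    · rw [MulChar.pow_apply' χ two_ne_zero]; ring
  rw [Finset.sum_congr rfl (fun y _ => hsplit y), Finset.sum_add_distrib,
    Finset.sum_add_distrib, sum_mulShift_zero ψ hψ ha, sum_chi_mulShift χ ψ ha,
    sum_chi_mulShift (χ^2) ψ ha, MulChar.pow_apply' (χ := χ) two_ne_zero]
  ring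

theorem key_lemma (χ : MulChar F ℂ) (hχ : χ ≠ 1) (hχ3 : χ^3 = 1) (ψ : AddChar F ℂ)
    (hψ : ψ.IsPrimitive) (β w : F) (hβ : β ≠ 0) (hw : w ≠ 0) :
    ∑ u : Fˣ, χ ↑u * ψ (β * (w * ↑u)⁻¹) * ∑ t : F, ψ (↑u * w^2 * t^3)
      = -(χ w * gaussSum χ ψ) + χ β⁻¹ * (Fintype.card F : ℂ) := by
  classical
  set G₁ := gaussSum χ ψ with hG₁
  set G₂ := gaussSum (χ^2) ψ with hG₂
  have hc3 : (χ w)^3 = 1 := chi_cube' χ hχ3 hw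
  have hcne : χ w ≠ 0 := chi_ne_zero χ hχ3 hw
  have hc2 : χ ((w^2)⁻¹) = χ w := by
    rw [chi_inv_val χ (pow_ne_zero 2 hw), map_pow]
    have h : χ w * (χ w ^ 2) = 1 := by linear_combination hc3
    exact (eq_inv_of_mul_eq_one_left h).symm
  have hsummand : ∀ u : Fˣ, χ ↑u * ψ (β * (w * ↑u)⁻¹) * ∑ t : F, ψ (↑u * w^2 * t^3)
      = (χ w * G₁) * ψ (β * (w * ↑u)⁻¹)
        + ((χ w)^2 * G₂) * (χ ((↑u : F)⁻¹) * ψ (β * (w * ↑u)⁻¹)) := by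
    intro u
    have hu : (u : F) ≠ 0 := Units.ne_zero u
    have ha : (u : F) * w^2 ≠ 0 := mul_ne_zero hu (pow_ne_zero _ hw)
    rw [cube_inner_sum χ hχ hχ3 ψ hψ ha]
    have hsplit : χ (((↑u : F) * w^2)⁻¹) = χ ((↑u : F)⁻¹) * χ w := by
      rw [mul_inv, map_mul, hc2]
    rw [hsplit]
    have h1 : χ ↑u * χ ((↑u : F)⁻¹) = 1 := by
      rw [← map_mul, mul_inv_cancel₀ hu, map_one]
    linear_combination (χ w * G₁ * ψ (β * (w * ↑u)⁻¹)
      + χ ((↑u : F)⁻¹) * (χ w)^2 * G₂ * ψ (β * (w * ↑u)⁻¹)) * h1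
  rw [Finset.sum_congr rfl (fun u _ => hsummand u), Finset.sum_add_distrib,
    ← Finset.mul_sum, ← Finset.mul_sum]
  -- the reindexing equivalence
  set wu : Fˣ := Units.mk0 w hw with hwu
  set e : Fˣ ≃ Fˣ := (Equiv.mulLeft wu).trans (Equiv.inv Fˣ) with he
  have heu : ∀ u : Fˣ, ((e u : Fˣ) : F) = (w * ↑u)⁻¹ := by
    intro u
    simp [he, hwu, Equiv.inv_apply]
  have hA : ∑ u : Fˣ, ψ (β * (w * ↑u)⁻¹) = -1 := by
    have h := Equiv.sum_comp e (fun v : Fˣ => ψ (β * ↑v))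
    have h2 : ∑ u : Fˣ, ψ (β * (w * ↑u)⁻¹) = ∑ u : Fˣ, ψ (β * ↑(e u)) := by
      refine Finset.sum_congr rfl fun u _ => ?_
      rw [heu u]
    rw [h2, h, sum_units_eq (fun y => ψ (β * y)), sum_mulShift_zero ψ hψ hβ]
    simp
  have hB : ∑ u : Fˣ, χ ((↑u : F)⁻¹) * ψ (β * (w * ↑u)⁻¹)
      = χ w * (χ β⁻¹ * G₁) := by
    have h2 : ∑ u : Fˣ, χ ((↑u : F)⁻¹) * ψ (β * (w * ↑u)⁻¹)
        = ∑ u : Fˣ, χ (w * ↑(e u)) * ψ (β * ↑(e u)) := by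
      refine Finset.sum_congr rfl fun u _ => ?_
      rw [heu u]
      congr 2
      rw [mul_inv, ← mul_assoc, mul_inv_cancel₀ hw, one_mul]
    rw [h2, Equiv.sum_comp e (fun v : Fˣ => χ (w * ↑v) * ψ (β * ↑v))]
    have h3 : ∑ v : Fˣ, χ (w * ↑v) * ψ (β * ↑v)
        = χ w * ∑ v : Fˣ, χ ↑v * ψ (β * ↑v) := by
      rw [Finset.mul_sum]
      exact Finset.sum_congr rfl fun v _ => by rw [map_mul]; ring
    rw [h3, sum_units_eq (fun y => χ y * ψ (β * y)), sum_chi_mulShift χ ψ hβ,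
      MulChar.map_zero]
    ring
  rw [hA, hB]
  -- Gauss sum product
  have hχinv : χ^2 = χ⁻¹ := by
    have h : χ^2 * χ = 1 := by rw [← pow_succ, hχ3]
    exact eq_inv_of_mul_eq_one_left h
  have hGG : G₁ * G₂ = (Fintype.card F : ℂ) := by
    have hG2 : G₂ = gaussSum χ⁻¹ ψ⁻¹ := by
      rw [hG₂, hχinv, ← mul_gaussSum_inv_eq_gaussSum χ⁻¹ ψ]
      rw [MulChar.inv_apply' χ (-1), inv_neg_one, chi_neg_one χ hχ3, one_mul]
    rw [hG2, hG₁]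
    exact gaussSum_mul_gaussSum_eq_card hχ hψ
  linear_combination (χ β⁻¹ * G₁ * G₂) * hc3 + χ β⁻¹ * hGG

end Key

namespace CubicSeries

open scoped Classical

set_option synthInstance.maxHeartbeats 400000
set_option maxHeartbeats 1000000

def ω : ℂ := Complex.exp (2 * Real.pi * Complex.I / 3)

def O : Subring ℂ := Subring.closure {ω}

abbrev OK : Type _ := O

def δ : ℂ := ω - ω ^ 2

def eC (z : ℂ) : ℂ :=
  Complex.exp (2 * Real.pi * Complex.I * (z / δ + (starRingEnd ℂ) (z / δ)))

def rep {I : Ideal OK} (x : OK ⧸ I) : OK :=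
  Function.surjInv Ideal.Quotient.mk_surjective x

/-- `N(c) = |𝒪/(c)|`, the absolute norm. -/
def Nm (c : OK) : ℕ := Nat.card (OK ⧸ Ideal.span {c})

/-- `φ(c) = |(𝒪/(c))ˣ|`. -/
def totient (c : OK) : ℕ := Nat.card ((OK ⧸ Ideal.span {c})ˣ)

/-- a multiplicative inverse modulo `c` (an arbitrary element when `x` is not invertible). -/
def invMod (c x : OK) : OK :=
  rep (Ring.inverse (Ideal.Quotient.mk (Ideal.span {c}) x))

def T (A B c : OK) : ℂ :=
  ∑ᶠ x : OK ⧸ Ideal.span {c}, eC (((A * rep x ^ 3 + B * rep x : OK) : ℂ) / (c : ℂ))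

/-- The cubic residue symbol `(x/π)₃` for a prime element `π` not dividing `3`:
the unique cube root of unity congruent to `x^{(N(π)-1)/3}` mod `π`, and `0` if `π ∣ x`. -/
def cubicCharP (π x : OK) : OK :=
  if h : ∃ ζ : OK, ζ ^ 3 = 1 ∧ π ∣ ζ - x ^ ((Nm π - 1) / 3) ∧ ¬ π ∣ x then h.choose else 0

/-- The cubic residue symbol `(x/c)₃` for `c` coprime to `3`, defined via a factorization of
`c` into a unit times prime elements (with multiplicity). -/
def cubicChar (c x : OK) : OK :=
  if h : ∃ fs : OKˣ × Multiset OK, (∀ π ∈ fs.2, Prime π) ∧ c = (fs.1 : OK) * fs.2.prod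
  then (h.choose.2.map fun π => cubicCharP π x).prod
  else 0

/-- The cubic Gauss sum `g(a,c) = ∑_{x (c)*} (x/c)₃ e(ax/c)`. -/
def gaussSum (a c : OK) : ℂ :=
  ∑ᶠ u : (OK ⧸ Ideal.span {c})ˣ,
    ((cubicChar c (rep u.val) : OK) : ℂ) * eC (((a * rep u.val : OK) : ℂ) / (c : ℂ))

/-- The Möbius function: `μ(c) = (−1)^r` if `(c)` is a product of `r` distinct prime ideals,
and `μ(c) = 0` otherwise. -/
def moebius (c : OK) : ℤ :=
  if h : ∃ s : Finset (Ideal OK), (∀ P ∈ s, Prime P) ∧ Ideal.span {c} = ∏ P ∈ s, P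
  then (-1) ^ h.choose.card
  else 0

/-- `p^n` modulo `c`, where a negative exponent means the inverse of `p^{-n}` mod `c`. -/
def ppow (c p : OK) (n : ℤ) : OK :=
  if 0 ≤ n then p ^ n.toNat else invMod c (p ^ (-n).toNat)

/-- A choice of generator of a (principal) ideal. -/
def gen (J : Ideal OK) : OK := if h : ∃ q : OK, Ideal.span {q} = J then h.choose else 0

/-- A choice of cofactor: `cofactor c q` is a `d` with `c = q·d`, when one exists. -/
def cofactor (c q : OK) : OK := if h : ∃ d : OK, c = q * d then h.choose else 0


lemma omega_eq : ω = Complex.exp ((2 * Real.pi / 3 : ℝ) * Complex.I) := by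
  unfold ω; congr 1; push_cast; ring

lemma omega_im_pos : 0 < ω.im := by
  rw [omega_eq, Complex.exp_ofReal_mul_I_im]
  apply Real.sin_pos_of_pos_of_lt_pi
  · positivity
  · nlinarith [Real.pi_pos]

lemma omega_pow_three : ω ^ 3 = 1 := by
  unfold ω
  rw [← Complex.exp_nat_mul]
  rw [show (3:ℕ) * (2 * (Real.pi:ℂ) * Complex.I / 3) = 2 * Real.pi * Complex.I by push_cast; ring]
  exact Complex.exp_two_pi_mul_I

lemma omega_ne_one : ω ≠ 1 := by
  intro h
  have := omega_im_pos
  rw [h] at this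
  simp at this

lemma omega_ne_zero : ω ≠ 0 := by
  intro h
  have := omega_pow_three
  rw [h] at this
  simp at this

lemma omega_sum : 1 + ω + ω ^ 2 = 0 := by
  have h : (ω - 1) * (1 + ω + ω ^ 2) = 0 := by
    have : (ω - 1) * (1 + ω + ω ^ 2) = ω ^ 3 - 1 := by ring
    rw [this, omega_pow_three, sub_self]
  rcases mul_eq_zero.mp h with h | h
  · exact absurd (by linear_combination h) omega_ne_one
  · exact h

lemma conj_omega : (starRingEnd ℂ) ω = ω ^ 2 := by
  have habs : ‖ω‖ = 1 := by rw [omega_eq]; exact Complex.norm_exp_ofReal_mul_I _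
  have h1 : ω * (starRingEnd ℂ) ω = 1 := by
    rw [Complex.mul_conj, Complex.normSq_eq_norm_sq, habs]; norm_num
  have h2 : ω * ω ^ 2 = 1 := by rw [← pow_succ']; exact omega_pow_three
  exact mul_left_cancel₀ omega_ne_zero (h1.trans h2.symm)

lemma conj_delta : (starRingEnd ℂ) δ = -δ := by
  unfold δ
  rw [map_sub, conj_omega, map_pow, conj_omega]
  have h4 : (ω ^ 2) ^ 2 = ω := by
    rw [← pow_mul]
    calc ω ^ 4 = ω ^ 3 * ω := by ring
    _ = ω := by rw [omega_pow_three, one_mul]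
  rw [h4]; ring

lemma delta_ne_zero : δ ≠ 0 := by
  intro h
  have him : δ.im = 0 := by rw [h]; rfl
  unfold δ at him
  rw [← conj_omega] at him
  rw [Complex.sub_im, Complex.conj_im] at him
  have := omega_im_pos
  simp at him
  linarith

lemma omega_mem : ω ∈ O := Subring.subset_closure rfl

lemma omega_sq : ω ^ 2 = -1 - ω := by linear_combination omega_sum

lemma mem_O_iff {z : ℂ} : z ∈ O ↔ ∃ a b : ℤ, z = a + b * ω := by
  constructor
  · intro hz
    induction hz using Subring.closure_induction with
    | mem x hx =>
      rw [Set.mem_singleton_iff] at hx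
      exact ⟨0, 1, by rw [hx]; push_cast; ring⟩
    | zero => exact ⟨0, 0, by push_cast; ring⟩
    | one => exact ⟨1, 0, by push_cast; ring⟩
    | add x y hx hy ihx ihy =>
      obtain ⟨a, b, rfl⟩ := ihx
      obtain ⟨c, d, rfl⟩ := ihy
      exact ⟨a + c, b + d, by push_cast; ring⟩
    | neg x hx ihx =>
      obtain ⟨a, b, rfl⟩ := ihx
      exact ⟨-a, -b, by push_cast; ring⟩
    | mul x y hx hy ihx ihy =>
      obtain ⟨a, b, rfl⟩ := ihx
      obtain ⟨c, d, rfl⟩ := ihy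
      refine ⟨a * c - b * d, a * d + b * c - b * d, ?_⟩
      push_cast
      linear_combination ((b:ℂ) * d) * omega_sq
  · rintro ⟨a, b, rfl⟩
    exact add_mem (intCast_mem O a) (mul_mem (intCast_mem O b) omega_mem)

lemma coord_eq_zero {a b : ℤ} (h : (a : ℂ) + b * ω = 0) : a = 0 ∧ b = 0 := by
  have him := congrArg Complex.im h
  simp only [Complex.add_im, Complex.intCast_im, Complex.mul_im, Complex.intCast_re,
    Complex.intCast_im, Complex.zero_im, zero_mul, add_zero, zero_add] at him
  have hb : b = 0 := by
    by_contra hb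
    have : (b:ℝ) ≠ 0 := Int.cast_ne_zero.mpr hb
    have := omega_im_pos
    rcases this.ne' with h'
    have := mul_ne_zero ‹(b:ℝ) ≠ 0› (ne_of_gt omega_im_pos)
    exact this him
  subst hb
  push_cast at h
  simp at h
  exact ⟨by exact_mod_cast h, rfl⟩

-- s(z) := z/δ + conj(z/δ)
lemma s_coords (c d : ℤ) :
    ((c : ℂ) + d * ω) / δ + (starRingEnd ℂ) (((c : ℂ) + d * ω) / δ) = (d : ℂ) := by
  rw [map_div₀, conj_delta, map_add, map_mul, conj_omega]
  rw [map_intCast, map_intCast]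
  rw [div_neg, ← sub_eq_add_neg, ← sub_div]
  have h1 : (c : ℂ) + d * ω - ((c:ℂ) + d * ω ^ 2) = (d : ℂ) * δ := by unfold δ; ring
  rw [h1, mul_div_assoc, div_self delta_ne_zero, mul_one]

lemma eC_coords (c d : ℤ) : eC ((c : ℂ) + d * ω) = 1 := by
  unfold eC
  rw [s_coords]
  rw [show 2 * (Real.pi:ℂ) * Complex.I * (d:ℂ) = (d:ℂ) * (2 * Real.pi * Complex.I) by ring]
  exact Complex.exp_int_mul_two_pi_mul_I d

lemma eC_mem (x : OK) : eC (x : ℂ) = 1 := by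
  obtain ⟨a, b, h⟩ := mem_O_iff.mp x.2
  rw [h]; exact eC_coords a b

lemma eC_add (z w : ℂ) : eC (z + w) = eC z * eC w := by
  unfold eC
  rw [← Complex.exp_add]
  congr 1
  rw [add_div, map_add]
  ring

lemma eC_zero : eC 0 = 1 := by
  unfold eC
  simp

lemma eC_div_congr {p a b : OK} (hp : (p : ℂ) ≠ 0) (h : p ∣ a - b) :
    eC ((a : ℂ) / p) = eC ((b : ℂ) / p) := by
  obtain ⟨c, hc⟩ := h
  have hC : (a : ℂ) = (b : ℂ) + (p : ℂ) * (c : ℂ) := by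
    have h2 := congrArg (fun x : OK => (x : ℂ)) hc
    push_cast at h2
    linear_combination h2
  have hdiv : (a : ℂ) / p = (b : ℂ) / p + (c : ℂ) := by
    rw [hC]
    field_simp
  rw [hdiv, eC_add, eC_mem c, mul_one]

lemma ok_coords (x : OK) : ∃ a b : ℤ, (x : ℂ) = a + b * ω := mem_O_iff.mp x.2

def ωO : OK := ⟨ω, omega_mem⟩

lemma coe_ωO : ((ωO : OK) : ℂ) = ω := rfl

lemma OK_ext {x y : OK} (h : (x : ℂ) = (y : ℂ)) : x = y := Subtype.ext h

lemma omegaO_cube : (ωO : OK) ^ 3 = 1 := by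
  apply OK_ext; push_cast [coe_ωO]; exact omega_pow_three

lemma omegaO_sum : (1 : OK) + ωO + ωO ^ 2 = 0 := by
  apply OK_ext; push_cast [coe_ωO]; exact omega_sum

lemma norm_package (p : OK) (hp0 : p ≠ 0) :
    ∃ (a b n : ℤ) (q : OK), (p : ℂ) = a + b * ω ∧ (q : ℂ) = (a : ℂ) + b * ω ^ 2 ∧
      p * q = ((n : ℤ) : OK) ∧ n = a ^ 2 - a * b + b ^ 2 ∧ 0 < n := by
  obtain ⟨a, b, hab⟩ := ok_coords p
  have hab0 : ¬(a = 0 ∧ b = 0) := by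
    rintro ⟨rfl, rfl⟩
    apply hp0
    apply OK_ext
    rw [hab]; push_cast; ring
  refine ⟨a, b, a ^ 2 - a * b + b ^ 2, ((a - b : ℤ) : OK) - ((b : ℤ) : OK) * ωO,
    hab, ?_, ?_, rfl, ?_⟩
  · push_cast [coe_ωO]
    linear_combination (-(b : ℂ)) * omega_sum
  · apply OK_ext
    push_cast [coe_ωO, hab]
    linear_combination (-(b : ℂ) ^ 2) * omega_sum
  · rcases eq_or_ne b 0 with rfl | hb
    · have ha : a ≠ 0 := fun h => hab0 ⟨h, rfl⟩
      have : 0 < a ^ 2 := by positivity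
      nlinarith
    · have hb2 : 0 < b ^ 2 := by positivity
      nlinarith [sq_nonneg (2 * a - b)]

lemma eC_int_div {c d n : ℤ} (hn : n ≠ 0) (h1 : eC (((c : ℂ) + d * ω) / (n : ℂ)) = 1) :
    n ∣ d := by
  have hnC : (n : ℂ) ≠ 0 := Int.cast_ne_zero.mpr hn
  have hs : ((c : ℂ) + d * ω) / (n : ℂ) / δ
      + (starRingEnd ℂ) (((c : ℂ) + d * ω) / (n : ℂ) / δ) = (d : ℂ) / n := by
    rw [div_right_comm, map_div₀, map_intCast, ← add_div, s_coords]
  unfold eC at h1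
  rw [hs, Complex.exp_eq_one_iff] at h1
  obtain ⟨k, hk⟩ := h1
  have hdk : (d : ℂ) / n = k := by
    have h2 : ((d : ℂ) / n - k) * (2 * Real.pi * Complex.I) = 0 := by
      linear_combination hk
    rcases mul_eq_zero.mp h2 with h | h
    · linear_combination h
    · exact absurd h Complex.two_pi_I_ne_zero
  have : (d : ℂ) = n * k := by rw [div_eq_iff hnC] at hdk; rw [hdk]; ring
  exact ⟨k, by exact_mod_cast this⟩

lemma quot_finite (p : OK) (hp0 : p ≠ 0) : Finite (OK ⧸ Ideal.span {p}) := by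
  obtain ⟨a, b, n, q, hab, hq, hpq, hn, hnpos⟩ := norm_package p hp0
  set N : ℕ := n.toNat with hN
  have hNn : (N : ℤ) = n := Int.toNat_of_nonneg hnpos.le
  haveI : NeZero N := ⟨by omega⟩
  have hpn : p ∣ ((n : ℤ) : OK) := ⟨q, hpq.symm⟩
  set f : ZMod N × ZMod N → OK ⧸ Ideal.span {p} := fun ab =>
    Ideal.Quotient.mk _ ((((ab.1.val : ℤ)) : OK) + (((ab.2.val : ℤ)) : OK) * ωO) with hf
  apply Finite.of_surjective f
  intro x
  obtain ⟨z, rfl⟩ := Ideal.Quotient.mk_surjective x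
  obtain ⟨c, d, hcd⟩ := ok_coords z
  have hz : z = ((c : ℤ) : OK) + ((d : ℤ) : OK) * ωO := by
    apply OK_ext; push_cast [coe_ωO]; exact hcd
  refine ⟨((c : ZMod N), (d : ZMod N)), ?_⟩
  rw [hf]
  rw [Ideal.Quotient.eq, Ideal.mem_span_singleton]
  have key : ∀ m : ℤ, ((m : ZMod N).val : ℤ) - m = n * ((((m : ZMod N).val : ℤ) - m) / n) := by
    intro m
    have hd : (N : ℤ) ∣ (((m : ZMod N).val : ℤ) - m) := by
      rw [← ZMod.intCast_zmod_eq_zero_iff_dvd]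
      push_cast
      rw [ZMod.natCast_val, ZMod.cast_id]
      ring
    rw [hNn] at hd
    exact (Int.ediv_mul_cancel hd).symm ▸ (Int.mul_ediv_cancel' hd).symm
  have hc' := key c
  have hd' := key d
  have hOK : ((((c : ZMod N).val : ℤ)) : OK) + ((((d : ZMod N).val : ℤ)) : OK) * ωO - z
      = ((n : ℤ) : OK) * (((((c : ZMod N).val : ℤ) - c) / n : ℤ) : OK)
        + ((n : ℤ) : OK) * (((((d : ZMod N).val : ℤ) - d) / n : ℤ) : OK) * ωO := by
    rw [hz]
    have e1 : ((((c : ZMod N).val : ℤ)) : OK) - ((c : ℤ) : OK)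
        = ((n : ℤ) : OK) * (((((c : ZMod N).val : ℤ) - c) / n : ℤ) : OK) := by
      exact_mod_cast congrArg (fun m : ℤ => ((m : ℤ) : OK)) hc'
    have e2 : ((((d : ZMod N).val : ℤ)) : OK) - ((d : ℤ) : OK)
        = ((n : ℤ) : OK) * (((((d : ZMod N).val : ℤ) - d) / n : ℤ) : OK) := by
      exact_mod_cast congrArg (fun m : ℤ => ((m : ℤ) : OK)) hd'
    linear_combination e1 + e2 * (ωO : OK)
  rw [hOK]
  exact dvd_add (hpn.mul_right _) ((hpn.mul_right _).mul_right _)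

lemma exists_eC_ne (p : OK) (hp : Prime p) : ∃ x : OK, eC ((x : ℂ) / (p : ℂ)) ≠ 1 := by
  by_contra hcon
  push_neg at hcon
  have hp0 : p ≠ 0 := hp.ne_zero
  obtain ⟨a, b, n, q, hab, hq, hpq, hn, hnpos⟩ := norm_package p hp0
  have hpC : (p : ℂ) ≠ 0 := fun h => hp0 (ZeroMemClass.coe_eq_zero.mp h)
  have hpqC : (p : ℂ) * (q : ℂ) = (n : ℂ) := by
    have := congrArg (fun x : OK => (x : ℂ)) hpq
    push_cast at this
    exact this
  have hqC : (q : ℂ) ≠ 0 := by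
    intro h
    rw [h, mul_zero] at hpqC
    have : n = 0 := by exact_mod_cast hpqC.symm
    omega
  have hnC : (n : ℂ) ≠ 0 := by rw [← hpqC]; exact mul_ne_zero hpC hqC
  -- first evaluation : x = 1
  have h1 : n ∣ -b := by
    apply eC_int_div hnpos.ne'
    have hcoord : (((a - b : ℤ) : ℂ) + ((-b : ℤ) : ℂ) * ω) = (q : ℂ) := by
      rw [hq]; push_cast; linear_combination (-(b:ℂ)) * omega_sum
    rw [hcoord]
    have hdiv : (q : ℂ) / (n : ℂ) = ((1 : OK) : ℂ) / (p : ℂ) := by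
      rw [← hpqC]; push_cast
      field_simp
    rw [hdiv]
    exact hcon 1
  -- second evaluation : x = ωO
  have h2 : n ∣ a := by
    apply eC_int_div hnpos.ne' (c := b)
    have hcoord : (((b : ℤ) : ℂ) + ((a : ℤ) : ℂ) * ω) = ω * (q : ℂ) := by
      rw [hq]; push_cast
      linear_combination (-(b:ℂ)) * omega_pow_three
    rw [hcoord]
    have hdiv : ω * (q : ℂ) / (n : ℂ) = ((ωO : OK) : ℂ) / (p : ℂ) := by
      rw [← hpqC, coe_ωO]
      field_simp
    rw [hdiv]
    exact hcon ωO
  have hb : n ∣ b := (dvd_neg.mp h1)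
  obtain ⟨a1, ha1⟩ := h2
  obtain ⟨b1, hb1⟩ := hb
  have hd1 : n ∣ 1 := by
    have hcalc : n * 1 = n * (n * (a1 ^ 2 - a1 * b1 + b1 ^ 2)) := by
      rw [mul_one]
      calc n = a ^ 2 - a * b + b ^ 2 := hn
        _ = n * (n * (a1 ^ 2 - a1 * b1 + b1 ^ 2)) := by rw [ha1, hb1]; ring
    exact ⟨a1 ^ 2 - a1 * b1 + b1 ^ 2, mul_left_cancel₀ hnpos.ne' hcalc⟩
  have hn1 : n = 1 := by
    rcases Int.isUnit_iff.mp (isUnit_of_dvd_one hd1) with h | h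
    · exact h
    · omega
  apply hp.not_unit
  apply IsUnit.of_mul_eq_one q
  rw [hpq, hn1]
  norm_num

-- ## cube roots of unity in OK

lemma cube_root_cases {ζ : OK} (h : ζ ^ 3 = 1) : ζ = 1 ∨ ζ = ωO ∨ ζ = ωO ^ 2 := by
  have h3 : ((ζ : ℂ)) ^ 3 = 1 := by exact_mod_cast congrArg (fun x : OK => (x : ℂ)) h
  have hC : ((ζ : ℂ) - 1) * ((ζ : ℂ) - ω) * ((ζ : ℂ) - ω ^ 2) = 0 := by
    linear_combination h3 + (-((ζ:ℂ) ^ 2) + (ζ:ℂ)) * omega_sum + ((ζ:ℂ) - 1) * omega_pow_three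
  rcases mul_eq_zero.mp hC with h' | h'
  · rcases mul_eq_zero.mp h' with h'' | h''
    · left; apply OK_ext; push_cast; linear_combination h''
    · right; left; apply OK_ext; push_cast [coe_ωO]; linear_combination h''
  · right; right; apply OK_ext; push_cast [coe_ωO]; linear_combination h'

lemma coe_threeOK : (((3 : OK) : ℂ)) = 3 := by
  rw [show (3 : OK) = ((3 : ℤ) : OK) by norm_num]
  push_cast
  exact Int.cast_three

lemma divs3 : ((1 : OK) - ωO) * (1 - ωO ^ 2) = 3 := by
  apply OK_ext; push_cast [coe_ωO, coe_threeOK]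
  linear_combination omega_pow_three - omega_sum

lemma divs3' : ((ωO : OK) - ωO ^ 2) * (ωO ^ 2 - ωO) = 3 := by
  apply OK_ext; push_cast [coe_ωO, coe_threeOK]
  linear_combination (2 - ω) * omega_pow_three - omega_sum

lemma p_ndvd_three {p : OK} (hp : Prime p) (hp3 : (3 : OK) ∣ p - 1) : ¬ p ∣ (3 : OK) := by
  intro h
  have h1 : p ∣ p - (p - 1) := dvd_sub (dvd_refl p) (h.trans hp3)
  rw [show p - (p - 1) = 1 by ring] at h1
  exact hp.not_unit (isUnit_of_dvd_one h1)

lemma cube_root_unique {p : OK} (hp : Prime p) (h3 : ¬ p ∣ (3 : OK)) {ζ ζ' : OK}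
    (hz : ζ ^ 3 = 1) (hz' : ζ' ^ 3 = 1) (hd : p ∣ ζ - ζ') : ζ = ζ' := by
  have d1 : ((1 : OK) - ωO) ∣ 3 := ⟨1 - ωO ^ 2, divs3.symm⟩
  have d2 : ((1 : OK) - ωO ^ 2) ∣ 3 := ⟨1 - ωO, by rw [mul_comm]; exact divs3.symm⟩
  have d3 : ((ωO : OK) - ωO ^ 2) ∣ 3 := ⟨ωO ^ 2 - ωO, divs3'.symm⟩
  have flip : ∀ x y : OK, p ∣ x - y → p ∣ y - x := fun x y hxy => by
    rw [show y - x = -(x - y) by ring]; exact dvd_neg.mpr hxy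
  rcases cube_root_cases hz with rfl | rfl | rfl <;>
    rcases cube_root_cases hz' with rfl | rfl | rfl
  · rfl
  · exact absurd (hd.trans d1) h3
  · exact absurd (hd.trans d2) h3
  · exact absurd ((flip _ _ hd).trans d1) h3
  · rfl
  · exact absurd (hd.trans d3) h3
  · exact absurd ((flip _ _ hd).trans d2) h3
  · exact absurd ((flip _ _ hd).trans d3) h3
  · rfl

-- ## cubicCharP basic lemmas

lemma chiP_zero {p x : OK} (hx : p ∣ x) : cubicCharP p x = 0 := by
  rw [cubicCharP, dif_neg]
  rintro ⟨ζ, _, _, h⟩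
  exact h hx

lemma choose_eq {pr qr : OK → Prop} (h : pr = qr) :
    (dite (∃ a, pr a) (fun h' => h'.choose) (fun _ => (0 : OK)))
      = (dite (∃ a, qr a) (fun h' => h'.choose) (fun _ => (0 : OK))) := by
  subst h; rfl

set_option maxHeartbeats 1000000 in
set_option synthInstance.maxHeartbeats 400000 in
lemma chiP_master {p : OK} (hp : Prime p) (hp3 : (3 : OK) ∣ p - 1) {x : OK} (hx : ¬ p ∣ x) :
    (cubicCharP p x) ^ 3 = 1 ∧ p ∣ cubicCharP p x - x ^ ((Nm p - 1) / 3) := by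
  classical
  haveI : Finite (OK ⧸ Ideal.span {p}) := quot_finite p hp.ne_zero
  haveI hprime : (Ideal.span {p}).IsPrime := (Ideal.span_singleton_prime hp.ne_zero).mpr hp
  haveI : IsDomain (OK ⧸ Ideal.span {p}) := Ideal.Quotient.isDomain _
  letI : Field (OK ⧸ Ideal.span {p}) := (Finite.isField_of_domain _).toField
  letI : Fintype (OK ⧸ Ideal.span {p}) := Fintype.ofFinite _
  set κ := Ideal.Quotient.mk (Ideal.span {p}) with hκdef
  have hκ0 : ∀ z : OK, κ z = 0 ↔ p ∣ z := fun z => by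
    rw [hκdef, Ideal.Quotient.eq_zero_iff_mem, Ideal.mem_span_singleton]
  have hnd3 : ¬ p ∣ (3 : OK) := p_ndvd_three hp hp3
  have hq : Nm p = Fintype.card (OK ⧸ Ideal.span {p}) := Nat.card_eq_fintype_card
  -- 3 ∣ Nm p - 1
  have hων : (κ ωO) ^ 3 = 1 := by rw [← map_pow, omegaO_cube, map_one]
  have hωu : IsUnit (κ ωO) := IsUnit.of_mul_eq_one ((κ ωO) ^ 2)
    (by rw [← pow_succ']; exact hων)
  haveI : Fact (Nat.Prime 3) := ⟨by norm_num⟩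
  have hord : orderOf hωu.unit = 3 := by
    apply orderOf_eq_prime
    · apply Units.ext
      rw [Units.val_pow_eq_pow_val, IsUnit.unit_spec, hων, Units.val_one]
    · intro h
      have h1 : κ ωO = 1 := by rw [← hωu.unit_spec, h, Units.val_one]
      have h2 : p ∣ ωO - 1 := by
        rw [← hκ0, map_sub, map_one, h1, sub_self]
      have d : ((ωO : OK) - 1) ∣ (3 : OK) :=
        ⟨ωO ^ 2 - 1, by linear_combination omegaO_sum - omegaO_cube⟩
      exact hnd3 (h2.trans d)
  have hdvd3 : 3 ∣ Nm p - 1 := by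
    have := hord ▸ orderOf_dvd_card (x := hωu.unit)
    rwa [Fintype.card_units, ← hq] at this
  have he3 : ((Nm p - 1) / 3) * 3 = Nm p - 1 := Nat.div_mul_cancel hdvd3
  -- existence
  have hx0 : κ x ≠ 0 := fun h => hx ((hκ0 x).mp h)
  set z := (κ x) ^ ((Nm p - 1) / 3) with hz
  have hz3 : z ^ 3 = 1 := by
    rw [hz, ← pow_mul, he3, hq]
    exact FiniteField.pow_card_sub_one_eq_one (κ x) hx0
  have hsF : (1 : OK ⧸ Ideal.span {p}) + κ ωO + (κ ωO) ^ 2 = 0 := by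
    have h0 := congrArg κ omegaO_sum
    rw [map_add, map_add, map_one, map_pow, map_zero] at h0
    exact h0
  have hfac : (z - 1) * (z - κ ωO) * (z - (κ ωO) ^ 2) = 0 := by
    linear_combination hz3 + (-(z ^ 2) + z) * hsF + (z - 1) * hων
  have hex : ∃ ζ : OK, ζ ^ 3 = 1 ∧ p ∣ ζ - x ^ ((Nm p - 1) / 3) ∧ ¬ p ∣ x := by
    have hdiv : ∀ ζ : OK, κ ζ = z → p ∣ ζ - x ^ ((Nm p - 1) / 3) := by
      intro ζ hζ
      rw [← hκ0, map_sub, hζ, map_pow, hz, sub_self]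
    rcases mul_eq_zero.mp hfac with h' | h'
    · rcases mul_eq_zero.mp h' with h'' | h''
      · exact ⟨1, one_pow 3, hdiv 1 (by rw [map_one, ← sub_eq_zero]; linear_combination -h''), hx⟩
      · exact ⟨ωO, omegaO_cube, hdiv ωO (by rw [← sub_eq_zero]; linear_combination -h''), hx⟩
    · refine ⟨ωO ^ 2, ?_, hdiv (ωO ^ 2) (by rw [map_pow, ← sub_eq_zero]; linear_combination -h'), hx⟩
      rw [← pow_mul, mul_comm, pow_mul, omegaO_cube, one_pow]
  constructor
  · rw [cubicCharP, dif_pos hex]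
    exact hex.choose_spec.1
  · rw [cubicCharP, dif_pos hex]
    exact hex.choose_spec.2.1

lemma chiP_unique {p : OK} (hp : Prime p) (hp3 : (3 : OK) ∣ p - 1) {x ζ : OK}
    (hx : ¬ p ∣ x) (h1 : ζ ^ 3 = 1) (h2 : p ∣ ζ - x ^ ((Nm p - 1) / 3)) :
    cubicCharP p x = ζ := by
  obtain ⟨hc3, hcd⟩ := chiP_master hp hp3 hx
  refine cube_root_unique hp (p_ndvd_three hp hp3) hc3 h1 ?_
  rw [show cubicCharP p x - ζ
    = (cubicCharP p x - x ^ ((Nm p - 1) / 3)) - (ζ - x ^ ((Nm p - 1) / 3)) by ring]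
  exact dvd_sub hcd h2

lemma chiP_congr {p : OK} (hp : Prime p) {x x' : OK} (h : p ∣ x - x') :
    cubicCharP p x = cubicCharP p x' := by
  by_cases hx : p ∣ x
  · have hx' : p ∣ x' := by
      rw [show x' = x - (x - x') by ring]; exact dvd_sub hx h
    rw [chiP_zero hx, chiP_zero hx']
  · have hx' : ¬ p ∣ x' := fun hx' =>
      hx (by rw [show x = x' + (x - x') by ring]; exact dvd_add hx' h)
    have hxe : p ∣ x ^ ((Nm p - 1) / 3) - x' ^ ((Nm p - 1) / 3) :=
      h.trans (sub_dvd_pow_sub_pow x x' _)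
    have hpred : (fun ζ : OK => ζ ^ 3 = 1 ∧ p ∣ ζ - x ^ ((Nm p - 1) / 3) ∧ ¬ p ∣ x)
        = (fun ζ : OK => ζ ^ 3 = 1 ∧ p ∣ ζ - x' ^ ((Nm p - 1) / 3) ∧ ¬ p ∣ x') := by
      funext ζ
      apply propext
      constructor
      · rintro ⟨a1, a2, _⟩
        refine ⟨a1, ?_, hx'⟩
        rw [show ζ - x' ^ ((Nm p - 1) / 3)
          = (ζ - x ^ ((Nm p - 1) / 3)) + (x ^ ((Nm p - 1) / 3) - x' ^ ((Nm p - 1) / 3)) by ring]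
        exact dvd_add a2 hxe
      · rintro ⟨a1, a2, _⟩
        refine ⟨a1, ?_, hx⟩
        rw [show ζ - x ^ ((Nm p - 1) / 3)
          = (ζ - x' ^ ((Nm p - 1) / 3)) - (x ^ ((Nm p - 1) / 3) - x' ^ ((Nm p - 1) / 3)) by ring]
        exact dvd_sub a2 hxe
    unfold cubicCharP
    exact choose_eq hpred

lemma chiP_mul {p : OK} (hp : Prime p) (hp3 : (3 : OK) ∣ p - 1) (x y : OK) :
    cubicCharP p (x * y) = cubicCharP p x * cubicCharP p y := by
  by_cases hx : p ∣ x
  · rw [chiP_zero (hx.mul_right y), chiP_zero hx, zero_mul]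
  by_cases hy : p ∣ y
  · rw [chiP_zero (hy.mul_left x), chiP_zero hy, mul_zero]
  have hxy : ¬ p ∣ x * y := by
    intro h
    rcases (hp.dvd_mul.mp h) with h' | h'
    exacts [hx h', hy h']
  obtain ⟨hx3, hxd⟩ := chiP_master hp hp3 hx
  obtain ⟨hy3, hyd⟩ := chiP_master hp hp3 hy
  apply chiP_unique hp hp3 hxy
  · rw [mul_pow, hx3, hy3, mul_one]
  · rw [show cubicCharP p x * cubicCharP p y - (x * y) ^ ((Nm p - 1) / 3)
      = (cubicCharP p x - x ^ ((Nm p - 1) / 3)) * cubicCharP p y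
        + x ^ ((Nm p - 1) / 3) * (cubicCharP p y - y ^ ((Nm p - 1) / 3)) by
        rw [mul_pow]; ring]
    exact dvd_add (hxd.mul_right _) (hyd.mul_left _)

lemma chiP_one {p : OK} (hp : Prime p) (hp3 : (3 : OK) ∣ p - 1) : cubicCharP p 1 = 1 := by
  apply chiP_unique hp hp3 (fun h => hp.not_unit (isUnit_of_dvd_one h)) (one_pow 3)
  rw [one_pow, sub_self]
  exact dvd_zero p

lemma cubicChar_eq_cubicCharP (p : OK) (hp : Prime p) (x : OK) :
    cubicChar p x = cubicCharP p x := by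
  classical
  have hex : ∃ fs : OKˣ × Multiset OK, (∀ π ∈ fs.2, Prime π) ∧ p = (fs.1 : OK) * fs.2.prod :=
    ⟨(1, {p}), by simpa using hp, by simp⟩
  rw [cubicChar, dif_pos hex]
  obtain ⟨hall, hprod⟩ := hex.choose_spec
  set u := hex.choose.1 with hu
  set ms := hex.choose.2 with hms0
  have hms : ∃ π, ms = {π} := by
    rw [← Multiset.card_eq_one]
    rcases Nat.lt_or_ge (Multiset.card ms) 1 with h | h
    · exfalso
      have : ms = 0 := by
        rw [← Multiset.card_eq_zero]; omega
      rw [this] at hprod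
      simp only [Multiset.prod_zero, mul_one] at hprod
      exact hp.not_unit (hprod ▸ (u.isUnit))
    rcases Nat.lt_or_ge (Multiset.card ms) 2 with h2 | h2
    · omega
    exfalso
    have hpos : ∃ y, y ∈ ms := Multiset.card_pos_iff_exists_mem.mp (by omega)
    obtain ⟨a, ha⟩ := hpos
    obtain ⟨t, hat⟩ := Multiset.exists_cons_of_mem ha
    have hmem_a : a ∈ ms := hat ▸ Multiset.mem_cons_self a t
    have htcard : 0 < Multiset.card t := by
      have := congrArg Multiset.card hat
      rw [Multiset.card_cons] at this
      omega
    have hpos2 : ∃ y, y ∈ t := Multiset.card_pos_iff_exists_mem.mp htcard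
    obtain ⟨b, hb⟩ := hpos2
    obtain ⟨t', hbt⟩ := Multiset.exists_cons_of_mem hb
    have hmem_b : b ∈ ms := by
      rw [hat, hbt]
      exact Multiset.mem_cons_of_mem (Multiset.mem_cons_self b t')
    have heq : p = ((u : OK) * a) * (b * t'.prod) := by
      rw [hprod, hat, hbt, Multiset.prod_cons, Multiset.prod_cons]
      ring
    rcases hp.irreducible.isUnit_or_isUnit heq with h' | h'
    · exact (hall a hmem_a).not_unit (isUnit_of_dvd_unit (Dvd.intro_left _ rfl) h')
    · exact (hall b hmem_b).not_unit (isUnit_of_dvd_unit (Dvd.intro _ rfl) h')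
  obtain ⟨π, hπ⟩ := hms
  rw [hπ, Multiset.map_singleton, Multiset.prod_singleton]
  have hπmem : π ∈ ms := hπ ▸ Multiset.mem_singleton_self π
  have hπprime : Prime π := hall π hπmem
  have hπp : Associated π p := ⟨u, by rw [hprod, hπ, Multiset.prod_singleton]; ring⟩
  have hspan : Ideal.span ({π} : Set OK) = Ideal.span {p} :=
    Ideal.span_singleton_eq_span_singleton.mpr hπp
  have hNm : Nm π = Nm p := by unfold Nm; rw [hspan]
  have hdvd : ∀ z : OK, π ∣ z ↔ p ∣ z := fun z => hπp.dvd_iff_dvd_left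
  have hpred : (fun ζ : OK => ζ ^ 3 = 1 ∧ π ∣ ζ - x ^ ((Nm π - 1) / 3) ∧ ¬ π ∣ x)
      = (fun ζ : OK => ζ ^ 3 = 1 ∧ p ∣ ζ - x ^ ((Nm p - 1) / 3) ∧ ¬ p ∣ x) := by
    funext ζ
    rw [hNm]
    apply propext
    simp only [hdvd]
  unfold cubicCharP
  exact choose_eq hpred

lemma span_singleton_dvd_iff_le {p : OK} {J : Ideal OK} :
    Ideal.span {p} ∣ J ↔ J ≤ Ideal.span {p} := by
  constructor
  · rintro ⟨C, rfl⟩; exact Ideal.mul_le_left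
  · intro h
    refine ⟨Submodule.colon J (Ideal.span {p}), ?_⟩
    apply le_antisymm
    · intro j hj
      obtain ⟨x, hx⟩ := Ideal.mem_span_singleton.mp (h hj)
      rw [Ideal.mem_span_singleton_mul]
      refine ⟨x, ?_, hx.symm⟩
      rw [Submodule.mem_colon]
      intro y hy
      obtain ⟨t, ht⟩ := Ideal.mem_span_singleton.mp hy
      rw [ht, show x • (p * t) = j * t by rw [smul_eq_mul, hx]; ring]
      exact Ideal.mul_mem_right _ _ hj
    · rw [Ideal.span_singleton_mul_le_iff]
      intro z hz
      have hz' := Submodule.mem_colon.mp hz p (Ideal.mem_span_singleton_self p)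
      rw [smul_eq_mul] at hz'
      rwa [mul_comm]

lemma prime_span {p : OK} (hp : Prime p) : Prime (Ideal.span ({p} : Set OK)) := by
  haveI hpr : (Ideal.span ({p} : Set OK)).IsPrime :=
    (Ideal.span_singleton_prime hp.ne_zero).mpr hp
  refine ⟨?_, ?_, ?_⟩
  · rw [Ne, Ideal.zero_eq_bot, Ideal.span_singleton_eq_bot]
    exact hp.ne_zero
  · rw [Ideal.isUnit_iff]
    intro h
    rw [Ideal.span_singleton_eq_top] at h
    exact hp.not_unit h
  · intro A B hAB
    have hle : A * B ≤ Ideal.span {p} := span_singleton_dvd_iff_le.mp hAB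
    rcases (Ideal.IsPrime.mul_le hpr).mp hle with h | h
    · exact Or.inl (span_singleton_dvd_iff_le.mpr h)
    · exact Or.inr (span_singleton_dvd_iff_le.mpr h)

lemma moebius_prime (p : OK) (hp : Prime p) : moebius p = -1 := by
  classical
  have hspb : Ideal.span ({p} : Set OK) ≠ ⊥ := by
    rw [Ne, Ideal.span_singleton_eq_bot]
    exact hp.ne_zero
  haveI hprime : (Ideal.span ({p} : Set OK)).IsPrime :=
    (Ideal.span_singleton_prime hp.ne_zero).mpr hp
  have hex : ∃ s : Finset (Ideal OK), (∀ P ∈ s, Prime P) ∧ Ideal.span {p} = ∏ P ∈ s, P := by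
    refine ⟨{Ideal.span {p}}, ?_, by simp⟩
    intro P hP
    rw [Finset.mem_singleton] at hP
    subst hP
    exact prime_span hp
  rw [moebius, dif_pos hex]
  obtain ⟨hall, hprod⟩ := hex.choose_spec
  set s := hex.choose with hs
  have hcard : s.card = 1 := by
    have hne : s.Nonempty := by
      rcases Finset.eq_empty_or_nonempty s with h | h
      · exfalso
        rw [h, Finset.prod_empty] at hprod
        exact hp.not_unit (by
          rw [← Ideal.span_singleton_eq_top (α := OK)]
          rw [hprod, Ideal.one_eq_top])
      · exact h
    rcases Nat.lt_or_ge s.card 2 with h | h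
    · have := Finset.card_pos.mpr hne
      omega
    exfalso
    obtain ⟨P₁, hP₁⟩ := hne
    have herase : (s.erase P₁).Nonempty := by
      rw [← Finset.card_pos, Finset.card_erase_of_mem hP₁]
      omega
    obtain ⟨P₂, hP₂⟩ := herase
    set Q : Ideal OK := ∏ P ∈ s.erase P₁, P with hQ
    have hprod2 : Ideal.span ({p} : Set OK) = P₁ * Q := by
      rw [hprod, ← Finset.mul_prod_erase s _ hP₁]
    have hQP₂ : P₂ ∣ Q := Finset.dvd_prod_of_mem _ hP₂
    -- a prime ideal equal to a product forces one factor to be ⊤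
    have key : ∀ I J : Ideal OK, Ideal.span ({p} : Set OK) = I * J →
        I ≤ Ideal.span {p} → (1 : OK) ∈ J := by
      intro I J hIJ hI
      have hle2 : Ideal.span ({p} : Set OK) ≤ I := hIJ ▸ Ideal.mul_le_left
      have hIeq : I = Ideal.span {p} := le_antisymm hI hle2
      rw [hIeq] at hIJ
      have hmem : p ∈ Ideal.span ({p} : Set OK) * J := by
        rw [← hIJ]; exact Ideal.mem_span_singleton_self p
      rw [Ideal.mem_span_singleton_mul] at hmem
      obtain ⟨z, hzJ, hz⟩ := hmem
      have hz1 : z = 1 := by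
        have : p * z = p * 1 := by rw [hz, mul_one]
        exact mul_left_cancel₀ hp.ne_zero this
      rwa [hz1] at hzJ
    have hle : P₁ * Q ≤ Ideal.span ({p} : Set OK) := le_of_eq hprod2.symm
    rcases (Ideal.IsPrime.mul_le hprime).mp hle with hc | hc
    · -- P₁ ≤ span p ⇒ 1 ∈ Q ⇒ P₂ unit
      have h1Q : (1 : OK) ∈ Q := key P₁ Q hprod2 hc
      have hQtop : Q = ⊤ := Ideal.eq_top_iff_one Q |>.mpr h1Q
      have : IsUnit P₂ := isUnit_of_dvd_unit hQP₂ (by rw [hQtop, ← Ideal.one_eq_top]; exact isUnit_one)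
      exact (hall P₂ (Finset.mem_of_mem_erase hP₂)).not_unit this
    · -- Q ≤ span p ⇒ 1 ∈ P₁
      have hprod3 : Ideal.span ({p} : Set OK) = Q * P₁ := by rw [hprod2, mul_comm]
      have h1P : (1 : OK) ∈ P₁ := key Q P₁ hprod3 hc
      have hPtop : P₁ = ⊤ := Ideal.eq_top_iff_one P₁ |>.mpr h1P
      exact (hall P₁ hP₁).not_unit (by rw [hPtop, ← Ideal.one_eq_top]; exact isUnit_one)
  rw [hcard, pow_one]

lemma three_dvd_Nm {p : OK} (hp : Prime p) (hp3 : (3 : OK) ∣ p - 1) : 3 ∣ Nm p - 1 := by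
  classical
  haveI : Finite (OK ⧸ Ideal.span {p}) := quot_finite p hp.ne_zero
  haveI hprime : (Ideal.span ({p} : Set OK)).IsPrime :=
    (Ideal.span_singleton_prime hp.ne_zero).mpr hp
  haveI : IsDomain (OK ⧸ Ideal.span {p}) := Ideal.Quotient.isDomain _
  letI : Field (OK ⧸ Ideal.span {p}) := (Finite.isField_of_domain _).toField
  letI : Fintype (OK ⧸ Ideal.span {p}) := Fintype.ofFinite _
  set κ := Ideal.Quotient.mk (Ideal.span ({p} : Set OK)) with hκdef
  have hκ0 : ∀ z : OK, κ z = 0 ↔ p ∣ z := fun z => by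
    rw [hκdef, Ideal.Quotient.eq_zero_iff_mem, Ideal.mem_span_singleton]
  have hnd3 : ¬ p ∣ (3 : OK) := p_ndvd_three hp hp3
  have hq : Nm p = Fintype.card (OK ⧸ Ideal.span {p}) := Nat.card_eq_fintype_card
  have hων : (κ ωO) ^ 3 = 1 := by rw [← map_pow, omegaO_cube, map_one]
  have hωu : IsUnit (κ ωO) := IsUnit.of_mul_eq_one ((κ ωO) ^ 2)
    (by rw [← pow_succ']; exact hων)
  haveI : Fact (Nat.Prime 3) := ⟨by norm_num⟩
  have hord : orderOf hωu.unit = 3 := by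
    apply orderOf_eq_prime
    · apply Units.ext
      rw [Units.val_pow_eq_pow_val, IsUnit.unit_spec, hων, Units.val_one]
    · intro h
      have h1 : κ ωO = 1 := by rw [← hωu.unit_spec, h, Units.val_one]
      have h2 : p ∣ ωO - 1 := by
        rw [← hκ0, map_sub, map_one, h1, sub_self]
      have d : ((ωO : OK) - 1) ∣ (3 : OK) :=
        ⟨ωO ^ 2 - 1, by linear_combination omegaO_sum - omegaO_cube⟩
      exact hnd3 (h2.trans d)
  have hdc := hord ▸ orderOf_dvd_card (x := hωu.unit)
  rwa [Fintype.card_units, ← hq] at hdc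

/- Statement 6 -/
theorem stmt6 (p w B b : OK) (hp : Prime p) (hp3 : (3 : OK) ∣ p - 1)
    (hco : IsCoprime (b * w * B) p) :
    ∑ᶠ u : (OK ⧸ Ideal.span {p})ˣ,
      ((cubicCharP p (rep u.val) : OK) : ℂ) *
        eC (((b * invMod p (w * rep u.val) : OK) : ℂ) / (p : ℂ)) *
        ∑ᶠ t : OK ⧸ Ideal.span {p},
          eC (((rep u.val * w ^ 2 * rep t ^ 3 + p * B * rep t : OK) : ℂ) / (p : ℂ)) =
      (moebius p : ℂ) * ((cubicCharP p w : OK) : ℂ) * gaussSum 1 p +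
        ((cubicCharP p (invMod p b) : OK) : ℂ) * (Nm p : ℂ) := by
  classical
  haveI hFin : Finite (OK ⧸ Ideal.span {p}) := quot_finite p hp.ne_zero
  haveI hprime : (Ideal.span ({p} : Set OK)).IsPrime :=
    (Ideal.span_singleton_prime hp.ne_zero).mpr hp
  haveI : IsDomain (OK ⧸ Ideal.span {p}) := Ideal.Quotient.isDomain _
  letI : Field (OK ⧸ Ideal.span {p}) := (Finite.isField_of_domain _).toField
  letI : Fintype (OK ⧸ Ideal.span {p}) := Fintype.ofFinite _
  set κ := Ideal.Quotient.mk (Ideal.span ({p} : Set OK)) with hκdef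
  have hpC : (p : ℂ) ≠ 0 := fun h => hp.ne_zero (ZeroMemClass.coe_eq_zero.mp h)
  have hκ0 : ∀ z : OK, κ z = 0 ↔ p ∣ z := fun z => by
    rw [hκdef, Ideal.Quotient.eq_zero_iff_mem, Ideal.mem_span_singleton]
  have hrep : ∀ x : OK ⧸ Ideal.span {p}, κ (rep x) = x := fun x =>
    Function.surjInv_eq Ideal.Quotient.mk_surjective x
  have hrepc : ∀ z : OK, p ∣ rep (κ z) - z := fun z => by
    rw [← hκ0, map_sub, hrep, sub_self]
  -- nondivisibility facts
  have hndb : ¬ p ∣ b := fun hd =>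
    hp.not_unit (hco.isUnit_of_dvd' ((hd.mul_right w).mul_right B) dvd_rfl)
  have hndw : ¬ p ∣ w := fun hd =>
    hp.not_unit (hco.isUnit_of_dvd' ((hd.mul_left b).mul_right B) dvd_rfl)
  have hβ : κ b ≠ 0 := fun h => hndb ((hκ0 b).mp h)
  have hwb : κ w ≠ 0 := fun h => hndw ((hκ0 w).mp h)
  have hndrep : ∀ u : (OK ⧸ Ideal.span {p})ˣ, ¬ p ∣ rep ((u : (OK ⧸ Ideal.span {p}))) := by
    intro u hd
    have : ((u : (OK ⧸ Ideal.span {p}))) = 0 := by rw [← hrep (u : OK ⧸ Ideal.span {p})]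
                                                   exact (hκ0 _).mpr hd
    exact Units.ne_zero u this
  -- the additive character
  let ψ : AddChar (OK ⧸ Ideal.span {p}) ℂ :=
    { toFun := fun z => eC (((rep z : OK) : ℂ) / (p : ℂ)),
      map_zero_eq_one' := by
        have h0 : p ∣ rep (0 : OK ⧸ Ideal.span {p}) - 0 := by
          have := hrepc 0
          rwa [map_zero] at this
        have h1 := eC_div_congr hpC h0
        simpa [eC_zero] using h1
      map_add_eq_mul' := by
        intro x y
        have h : p ∣ rep (x + y) - (rep x + rep y) := by
          rw [← hκ0, map_sub, map_add, hrep, hrep, hrep, sub_self]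
        show eC _ = eC _ * eC _
        rw [eC_div_congr hpC h]
        push_cast
        rw [add_div, eC_add] }
  have hψ_mk : ∀ z : OK, ψ (κ z) = eC ((z : ℂ) / (p : ℂ)) := fun z =>
    eC_div_congr hpC (hrepc z)
  have hψne : ψ ≠ 1 := by
    obtain ⟨x, hx⟩ := exists_eC_ne p hp
    rw [AddChar.ne_one_iff]
    exact ⟨κ x, by rw [hψ_mk]; exact hx⟩
  have hψprim : ψ.IsPrimitive := AddChar.IsPrimitive.of_ne_one hψne
  -- the multiplicative character
  let χ : MulChar (OK ⧸ Ideal.span {p}) ℂ :=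
    { toFun := fun z => ((cubicCharP p (rep z) : OK) : ℂ),
      map_one' := by
        have h1 : cubicCharP p (rep (1 : OK ⧸ Ideal.span {p})) = cubicCharP p 1 := by
          apply chiP_congr hp
          have := hrepc 1
          rwa [map_one] at this
        show ((cubicCharP p (rep (1 : OK ⧸ Ideal.span {p})) : OK) : ℂ) = 1
        rw [h1, chiP_one hp hp3, OneMemClass.coe_one]
      map_mul' := by
        intro x y
        show ((cubicCharP p (rep (x * y)) : OK) : ℂ) = _
        have h1 : cubicCharP p (rep (x * y)) = cubicCharP p (rep x * rep y) := by
          apply chiP_congr hp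
          rw [← hκ0, map_sub, map_mul, hrep, hrep, hrep, sub_self]
        rw [h1, chiP_mul hp hp3]
        push_cast
        ring
      map_nonunit' := by
        intro a ha
        have ha0 : a = 0 := by
          by_contra h
          exact ha (isUnit_iff_ne_zero.mpr h)
        subst ha0
        have h0 : p ∣ rep (0 : OK ⧸ Ideal.span {p}) := by
          have := hrepc 0
          rwa [map_zero, sub_zero] at this
        show ((cubicCharP p (rep (0 : OK ⧸ Ideal.span {p})) : OK) : ℂ) = 0
        rw [chiP_zero h0]
        simp }
  have hχ_mk : ∀ z : OK, χ (κ z) = ((cubicCharP p z : OK) : ℂ) := by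
    intro z
    show ((cubicCharP p (rep (κ z)) : OK) : ℂ) = _
    rw [chiP_congr hp (hrepc z)]
  have hχ3 : χ ^ 3 = 1 := by
    apply MulChar.ext
    intro a
    rw [MulChar.pow_apply_coe, MulChar.one_apply_coe]
    have hmaster := (chiP_master hp hp3 (hndrep a)).1
    show ((cubicCharP p (rep ((a : (OK ⧸ Ideal.span {p})))) : OK) : ℂ) ^ 3 = 1
    calc ((cubicCharP p (rep ((a : (OK ⧸ Ideal.span {p})))) : OK) : ℂ) ^ 3
        = (((cubicCharP p (rep ((a : (OK ⧸ Ideal.span {p})))) ^ 3 : OK)) : ℂ) := by push_cast; ring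
      _ = 1 := by rw [hmaster, OneMemClass.coe_one]
  have hq : Nm p = Fintype.card (OK ⧸ Ideal.span {p}) := Nat.card_eq_fintype_card
  have h3dvd : 3 ∣ Nm p - 1 := three_dvd_Nm hp hp3
  have hcard2 : 2 ≤ Fintype.card (OK ⧸ Ideal.span {p}) := Fintype.one_lt_card
  have hχne : χ ≠ 1 := by
    obtain ⟨g, hg⟩ := IsCyclic.exists_generator (α := (OK ⧸ Ideal.span {p})ˣ)
    rw [MulChar.ne_one_iff]
    refine ⟨g, fun hone => ?_⟩
    have h1 : cubicCharP p (rep ((g : (OK ⧸ Ideal.span {p})))) = 1 := by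
      apply OK_ext
      rw [OneMemClass.coe_one]
      exact hone
    have h2 := (chiP_master hp hp3 (hndrep g)).2
    rw [h1] at h2
    have h3 : ((g : (OK ⧸ Ideal.span {p}))) ^ ((Nm p - 1) / 3) = 1 := by
      have h4 := (hκ0 _).mpr h2
      rw [map_sub, map_one, map_pow, hrep] at h4
      exact (sub_eq_zero.mp h4).symm
    have h4 : g ^ ((Nm p - 1) / 3) = 1 :=
      Units.ext (by rw [Units.val_pow_eq_pow_val, h3, Units.val_one])
    have h5 := orderOf_dvd_of_pow_eq_one h4
    have hordg : orderOf g = Fintype.card (OK ⧸ Ideal.span {p})ˣ := by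
      rw [orderOf_eq_card_of_forall_mem_zpowers hg, Nat.card_eq_fintype_card]
    rw [hordg, Fintype.card_units, ← hq] at h5
    have hpos : 0 < (Nm p - 1) / 3 := by
      have : 3 ≤ Nm p - 1 := Nat.le_of_dvd (by omega) h3dvd
      omega
    have hle := Nat.le_of_dvd hpos h5
    have hlt : (Nm p - 1) / 3 < Nm p - 1 := Nat.div_lt_self (by omega) (by norm_num)
    omega
  -- bridge for the Gauss sum
  have hgauss : gaussSum 1 p = _root_.gaussSum χ ψ := by
    rw [gaussSum, finsum_eq_sum_of_fintype]
    have hterm : ∀ u : (OK ⧸ Ideal.span {p})ˣ,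
        ((cubicChar p (rep (u : (OK ⧸ Ideal.span {p}))) : OK) : ℂ) *
          eC (((1 * rep (u : (OK ⧸ Ideal.span {p})) : OK) : ℂ) / (p : ℂ))
        = χ ((u : (OK ⧸ Ideal.span {p}))) * ψ ((u : (OK ⧸ Ideal.span {p}))) := by
      intro u
      rw [cubicChar_eq_cubicCharP p hp, one_mul]
      rfl
    rw [Finset.sum_congr rfl (fun u _ => hterm u)]
    rw [sum_units_eq (fun y => χ y * ψ y), MulChar.map_zero, zero_mul, sub_zero]
    rfl
  -- transform the left-hand side
  rw [finsum_eq_sum_of_fintype]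
  have hsummand : ∀ u : (OK ⧸ Ideal.span {p})ˣ,
      ((cubicCharP p (rep (u : (OK ⧸ Ideal.span {p}))) : OK) : ℂ) *
        eC (((b * invMod p (w * rep (u : (OK ⧸ Ideal.span {p}))) : OK) : ℂ) / (p : ℂ)) *
        ∑ᶠ t : OK ⧸ Ideal.span {p},
          eC (((rep (u : (OK ⧸ Ideal.span {p})) * w ^ 2 * rep t ^ 3 + p * B * rep t : OK) : ℂ)
            / (p : ℂ))
      = χ ((u : (OK ⧸ Ideal.span {p}))) * ψ (κ b * (κ w * (u : (OK ⧸ Ideal.span {p})))⁻¹) *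
          ∑ t : OK ⧸ Ideal.span {p}, ψ ((u : (OK ⧸ Ideal.span {p})) * (κ w) ^ 2 * t ^ 3) := by
    intro u
    congr 1
    · congr 1
      rw [← hψ_mk]
      congr 1
      rw [map_mul]
      congr 1
      show κ (rep (Ring.inverse (κ (w * rep (u : (OK ⧸ Ideal.span {p})))))) = _
      rw [hrep, map_mul, hrep, Ring.inverse_eq_inv']
    · rw [finsum_eq_sum_of_fintype]
      refine Finset.sum_congr rfl fun t _ => ?_
      rw [← hψ_mk]
      congr 1
      rw [map_add, map_mul, map_mul, map_pow, map_pow, hrep, hrep, map_mul, map_mul,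
        (hκ0 p).mpr dvd_rfl, zero_mul, zero_mul, add_zero]
  rw [Finset.sum_congr rfl (fun u _ => hsummand u)]
  rw [key_lemma χ hχne hχ3 ψ hψprim (κ b) (κ w) hβ hwb]
  -- match the right-hand side
  rw [moebius_prime p hp, hgauss, hq]
  rw [show ((cubicCharP p w : OK) : ℂ) = χ (κ w) from (hχ_mk w).symm]
  rw [show ((cubicCharP p (invMod p b) : OK) : ℂ) = χ ((κ b)⁻¹) by
    rw [← hχ_mk]
    congr 1
    show κ (rep (Ring.inverse (κ b))) = _
    rw [hrep, Ring.inverse_eq_inv']]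
  push_cast
  ring


end CubicSeries
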